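/- arXiv:2103.09961 — 4 statements merged into one kernel-verified Lean document; each statement's English description precedes it below -/
import Mathlib

section
/- Let T be a bounded operator on a complex Hilbert space such that the sequence ((T*ʲTʲ)^{1/j})_{j≥1} is monotonically increasing (this holds in particular when T is of class A), and let n be an integer ≥ 2. If Tⁿ is quasinormal, then T is quasinormal. -/
set_option maxHeartbeats 1000000


open ContinuousLinearMap in
private lemma embry_pow {H : Type*} [NormedAddCommGroup H] [InnerProductSpace ℂ H]
    [CompleteSpace H] (S : H →L[ℂ] H) (hq : S * (star S * S) = (star S * S) * S) :
    ∀ k : ℕ, star (S ^ k) * S ^ k = (star S * S) ^ k := by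
  have hcomm : ∀ m : ℕ, (star S * S) * S ^ m = S ^ m * (star S * S) := by
    intro m
    induction m with
    | zero => simp
    | succ m ih =>
      rw [pow_succ, ← mul_assoc, ih, mul_assoc, ← hq, ← mul_assoc]
  intro k
  induction k with
  | zero => simp
  | succ k ih =>
    rw [pow_succ' S k, star_mul, mul_assoc, ← mul_assoc (star S), hcomm k, ← mul_assoc, ih,
      ← pow_succ]

private lemma rbound {t δ M : ℝ} (ht : 0 ≤ t) (htM : t ≤ M) (hδ : 0 < δ) {n : ℕ} (hn : 1 ≤ n)
    (j : ℕ) : |t ^ (j+1) - t ^ (n + (j+1)) / (t ^ n + δ ^ n)| ≤ M ^ j * δ := by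
  have hden : 0 < t ^ n + δ ^ n := by positivity
  have key : t * δ ^ n / (t ^ n + δ ^ n) ≤ δ := by
    rw [div_le_iff₀ hden, mul_add]
    rcases le_total t δ with h | h
    · have h1 : t * δ ^ n ≤ δ * δ ^ n := mul_le_mul_of_nonneg_right h (pow_nonneg hδ.le n)
      have h2 : 0 ≤ δ * t ^ n := mul_nonneg hδ.le (pow_nonneg ht n)
      linarith
    · have h1 : δ ^ (n-1) ≤ t ^ (n-1) := pow_le_pow_left₀ hδ.le h _
      have h2 : t * δ ^ n ≤ δ * t ^ n := by
        have e1 : t * δ ^ n = (t * δ) * δ ^ (n-1) := by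
          rw [mul_assoc, ← pow_succ', Nat.sub_add_cancel hn]
        have e2 : δ * t ^ n = (t * δ) * t ^ (n-1) := by
          rw [mul_comm t δ, mul_assoc, ← pow_succ', Nat.sub_add_cancel hn]
        rw [e1, e2]
        exact mul_le_mul_of_nonneg_left h1 (by positivity)
      have h3 : 0 ≤ δ * δ ^ n := mul_nonneg hδ.le (pow_nonneg hδ.le n)
      linarith
  have heq : t ^ (j+1) - t ^ (n + (j+1)) / (t ^ n + δ ^ n)
      = t ^ j * (t * δ ^ n / (t ^ n + δ ^ n)) := by
    field_simp
    ring
  rw [heq, abs_of_nonneg (by positivity)]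
  exact mul_le_mul (pow_le_pow_left₀ ht htM j) key (by positivity) (pow_nonneg (ht.trans htM) j)

open ContinuousLinearMap in
private lemma key_cfc {H : Type*} [NormedAddCommGroup H] [InnerProductSpace ℂ H]
    [CompleteSpace H] (T Q : H →L[ℂ] H) (hQsa : IsSelfAdjoint Q) (n : ℕ)
    (h : ∀ j : ℕ, n ≤ j → star T * Q ^ j * T = Q ^ (j + 1))
    (f : ℝ → ℝ) (hf : ContinuousOn f (spectrum ℝ Q)) :
    star T * cfc (fun t : ℝ => t ^ n * f t) Q * T = cfc (fun t : ℝ => t ^ (n + 1) * f t) Q := by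
  set s : Set ℝ := spectrum ℝ Q with hs
  set q : C(s, ℝ) := ContinuousMap.restrict s (ContinuousMap.id ℝ) with hqdef
  have hq_pow : ∀ m : ℕ, cfcHom hQsa (q ^ m) = Q ^ m := fun m => by
    rw [map_pow, cfcHom_id hQsa]
  have hmono : ∀ (a : ℝ) (k : ℕ), star T * cfcHom hQsa (q ^ n * (a • q ^ k)) * T
      = cfcHom hQsa (q ^ (n+1) * (a • q ^ k)) := by
    intro a k
    have h1 : q ^ n * (a • q ^ k) = a • q ^ (n + k) := by
      rw [mul_smul_comm, ← pow_add]
    have h2 : q ^ (n+1) * (a • q ^ k) = a • q ^ (n + k + 1) := by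
      rw [mul_smul_comm, ← pow_add]
      congr 2
      omega
    rw [h1, h2, map_smul, map_smul, hq_pow, hq_pow, mul_smul_comm, smul_mul_assoc,
      h (n+k) (Nat.le_add_right n k)]
  have hpoly : ∀ p : Polynomial ℝ, star T * cfcHom hQsa (q ^ n * p.toContinuousMapOn s) * T
      = cfcHom hQsa (q ^ (n+1) * p.toContinuousMapOn s) := by
    intro p
    have hCX : ∀ (a : ℝ) (k : ℕ),
        (Polynomial.C a * Polynomial.X ^ k : Polynomial ℝ).toContinuousMapOn s = a • q ^ k := by
      intro a k
      ext x
      simp [q, Polynomial.toContinuousMapOn, Polynomial.toContinuousMap]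
    induction p using Polynomial.induction_on with
    | C a =>
      have : (Polynomial.C a).toContinuousMapOn s = a • q ^ 0 := by
        simpa using hCX a 0
      rw [this]
      exact hmono a 0
    | add p1 p2 ih1 ih2 =>
      have : (p1 + p2).toContinuousMapOn s = p1.toContinuousMapOn s + p2.toContinuousMapOn s :=
        map_add (Polynomial.toContinuousMapOnAlgHom s) p1 p2
      rw [this]
      simp only [mul_add, add_mul, map_add]
      rw [ih1, ih2]
    | monomial k a _ =>
      rw [hCX a (k+1)]
      exact hmono a (k+1)
  have hgen : ∀ g : C(s, ℝ),
      star T * cfcHom hQsa (q ^ n * g) * T = cfcHom hQsa (q ^ (n+1) * g) := by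
    intro g
    have hc1 : Continuous fun g : C(s,ℝ) => star T * cfcHom hQsa (q ^ n * g) * T :=
      (continuous_const.mul ((cfcHom_continuous hQsa).comp
        (continuous_const.mul continuous_id))).mul continuous_const
    have hc2 : Continuous fun g : C(s,ℝ) => cfcHom hQsa (q ^ (n+1) * g) :=
      (cfcHom_continuous hQsa).comp (continuous_const.mul continuous_id)
    have hcl : IsClosed {g : C(s,ℝ) |
        star T * cfcHom hQsa (q ^ n * g) * T = cfcHom hQsa (q ^ (n+1) * g)} :=
      isClosed_eq hc1 hc2
    have hsub : (polynomialFunctions s : Set C(s,ℝ)) ⊆ {g : C(s,ℝ) |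
        star T * cfcHom hQsa (q ^ n * g) * T = cfcHom hQsa (q ^ (n+1) * g)} := by
      intro g hg
      have : g ∈ Set.range (Polynomial.toContinuousMapOnAlgHom s) := by
        rw [← polynomialFunctions_coe]
        exact hg
      obtain ⟨p, rfl⟩ := this
      exact hpoly p
    have hmem : g ∈ closure (polynomialFunctions s : Set C(s,ℝ)) := by
      have := ContinuousMap.continuousMap_mem_subalgebra_closure_of_separatesPoints
        (polynomialFunctions s) (polynomialFunctions_separatesPoints s) g
      rwa [← SetLike.mem_coe, Subalgebra.topologicalClosure_coe] at this
    exact closure_minimal hsub hcl hmem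
  have hfc : ContinuousOn (fun t : ℝ => t ^ n * f t) s :=
    (continuous_pow n).continuousOn.mul hf
  have hfc1 : ContinuousOn (fun t : ℝ => t ^ (n+1) * f t) s :=
    (continuous_pow (n+1)).continuousOn.mul hf
  let g : C(s, ℝ) := ⟨s.restrict f, hf.restrict⟩
  have e1 : cfc (fun t : ℝ => t ^ n * f t) Q = cfcHom hQsa (q ^ n * g) := by
    rw [cfc_apply (fun t : ℝ => t ^ n * f t) Q hQsa hfc]
    congr 1
  have e2 : cfc (fun t : ℝ => t ^ (n+1) * f t) Q = cfcHom hQsa (q ^ (n+1) * g) := by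
    rw [cfc_apply (fun t : ℝ => t ^ (n+1) * f t) Q hQsa hfc1]
    congr 1
  rw [e1, e2]
  exact hgen g

open ContinuousLinearMap in
private lemma pow_transfer {H : Type*} [NormedAddCommGroup H] [InnerProductSpace ℂ H]
    [CompleteSpace H] [Nontrivial H] (T Q : H →L[ℂ] H) (hQ : 0 ≤ Q) {n : ℕ} (hn : 1 ≤ n)
    (h : ∀ j : ℕ, n ≤ j → star T * Q ^ j * T = Q ^ (j + 1)) :
    (∀ j : ℕ, 1 ≤ j → star T * Q ^ j * T = Q ^ (j + 1)) ∧ Q ≤ star T * T := by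
  have hQsa : IsSelfAdjoint Q := .of_nonneg hQ
  have hspec : ∀ x ∈ spectrum ℝ Q, 0 ≤ x ∧ x ≤ ‖Q‖ := fun x hx =>
    ⟨spectrum_nonneg_of_nonneg hQ hx,
      (le_abs_self x).trans (spectrum.norm_le_norm_of_mem hx)⟩
  -- generic distance estimates
  have hcfc : ∀ (i : ℕ) (δ : ℝ), 0 < δ →
      ‖Q ^ (i+1) - cfc (fun t : ℝ => t ^ n * (t ^ (i+1) / (t ^ n + δ ^ n))) Q‖ ≤ ‖Q‖ ^ i * δ := by
    intro i δ hδ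
    have hgc : ContinuousOn (fun t : ℝ => t ^ n * (t ^ (i+1) / (t ^ n + δ ^ n))) (spectrum ℝ Q) := by
      apply (continuous_pow n).continuousOn.mul
      apply ContinuousOn.div (continuous_pow (i+1)).continuousOn
        ((continuous_pow n).continuousOn.add continuousOn_const)
      intro x hx
      have := (hspec x hx).1
      exact ne_of_gt (by positivity : (0:ℝ) < x ^ n + δ ^ n)
    rw [← cfc_pow_id (R := ℝ) Q (i+1) hQsa, ← cfc_sub _ _ Q (continuous_pow (i+1)).continuousOn hgc]
    apply norm_cfc_le (by positivity)
    intro x hx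
    obtain ⟨hx0, hxM⟩ := hspec x hx
    have hden : (0:ℝ) < x ^ n + δ ^ n := by positivity
    have heq : x ^ n * (x ^ (i+1) / (x ^ n + δ ^ n)) = x ^ (n + (i+1)) / (x ^ n + δ ^ n) := by
      rw [pow_add]
      ring
    rw [Real.norm_eq_abs, heq]
    exact rbound hx0 hxM hδ hn i
  -- first conclusion
  have main : ∀ j : ℕ, 1 ≤ j → star T * Q ^ j * T = Q ^ (j + 1) := by
    intro j hj
    obtain ⟨i, rfl⟩ : ∃ i, j = i + 1 := ⟨j - 1, (Nat.succ_pred_eq_of_pos hj).symm⟩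
    have hb : ∀ δ : ℝ, 0 < δ →
        ‖star T * Q ^ (i+1) * T - Q ^ (i+1+1)‖ ≤ (‖T‖ * ‖T‖ * ‖Q‖ ^ i + ‖Q‖ ^ (i+1)) * δ := by
      intro δ hδ
      set g : ℝ → ℝ := fun t => t ^ (i+1) / (t ^ n + δ ^ n) with hg
      have hgc : ContinuousOn g (spectrum ℝ Q) := by
        apply ContinuousOn.div (continuous_pow (i+1)).continuousOn
          ((continuous_pow n).continuousOn.add continuousOn_const)
        intro x hx
        have := (hspec x hx).1
        exact ne_of_gt (by positivity : (0:ℝ) < x ^ n + δ ^ n)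
      have hkey := key_cfc T Q hQsa n h g hgc
      set X := cfc (fun t : ℝ => t ^ n * g t) Q with hX
      set Y := cfc (fun t : ℝ => t ^ (n+1) * g t) Q with hY
      have d1 : ‖Q ^ (i+1) - X‖ ≤ ‖Q‖ ^ i * δ := hcfc i δ hδ
      have d2 : ‖Y - Q ^ (i+1+1)‖ ≤ ‖Q‖ ^ (i+1) * δ := by
        have : Y = cfc (fun t : ℝ => t ^ n * (t ^ (i+1+1) / (t ^ n + δ ^ n))) Q := by
          apply cfc_congr
          intro x hx
          have hden : (0:ℝ) < x ^ n + δ ^ n := by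
            have := (hspec x hx).1; positivity
          simp only [hg]
          rw [pow_succ, pow_succ]
          field_simp
          ring
        rw [this, ← norm_neg, neg_sub]
        exact hcfc (i+1) δ hδ
      have split : star T * Q ^ (i+1) * T - Q ^ (i+1+1)
          = star T * (Q ^ (i+1) - X) * T + (Y - Q ^ (i+1+1)) := by
        rw [← hkey]
        noncomm_ring
      rw [split]
      calc ‖star T * (Q ^ (i+1) - X) * T + (Y - Q ^ (i+1+1))‖
          ≤ ‖star T * (Q ^ (i+1) - X) * T‖ + ‖Y - Q ^ (i+1+1)‖ := norm_add_le _ _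
        _ ≤ ‖T‖ * ‖T‖ * ‖Q ^ (i+1) - X‖ + ‖Y - Q ^ (i+1+1)‖ := by
            have h1 : ‖star T * (Q ^ (i+1) - X) * T‖ ≤ ‖T‖ * ‖Q ^ (i+1) - X‖ * ‖T‖ := by
              calc ‖star T * (Q ^ (i+1) - X) * T‖ ≤ ‖star T * (Q ^ (i+1) - X)‖ * ‖T‖ :=
                    norm_mul_le _ _
                _ ≤ ‖star T‖ * ‖Q ^ (i+1) - X‖ * ‖T‖ := by
                    gcongr
                    exact norm_mul_le _ _
                _ = ‖T‖ * ‖Q ^ (i+1) - X‖ * ‖T‖ := by rw [norm_star]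
            have h2 : ‖T‖ * ‖Q ^ (i+1) - X‖ * ‖T‖ = ‖T‖ * ‖T‖ * ‖Q ^ (i+1) - X‖ := by ring
            linarith
        _ ≤ ‖T‖ * ‖T‖ * (‖Q‖ ^ i * δ) + ‖Q‖ ^ (i+1) * δ := by
            gcongr
        _ = (‖T‖ * ‖T‖ * ‖Q‖ ^ i + ‖Q‖ ^ (i+1)) * δ := by ring
    have hzero : ‖star T * Q ^ (i+1) * T - Q ^ (i+1+1)‖ ≤ 0 := by
      apply le_of_forall_pos_le_add
      intro ε hε
      set C : ℝ := ‖T‖ * ‖T‖ * ‖Q‖ ^ i + ‖Q‖ ^ (i+1) with hC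
      have hC0 : 0 ≤ C := by positivity
      have hδ : 0 < ε / (C + 1) := by positivity
      calc ‖star T * Q ^ (i+1) * T - Q ^ (i+1+1)‖ ≤ C * (ε / (C + 1)) := hb _ hδ
        _ ≤ ε := by
            rw [mul_div_assoc']
            rw [div_le_iff₀ (by positivity)]
            nlinarith
        _ ≤ 0 + ε := by linarith
    have := le_antisymm hzero (norm_nonneg _)
    rwa [norm_eq_zero, sub_eq_zero] at this
  refine ⟨main, ?_⟩
  -- second conclusion : Q ≤ star T * T
  have hb : ∀ δ : ℝ, 0 < δ → Q ≤ star T * T + δ • (1 : H →L[ℂ] H) := by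
    intro δ hδ
    set g : ℝ → ℝ := fun t => 1 / (t ^ n + δ ^ n) with hg
    have hgc : ContinuousOn g (spectrum ℝ Q) := by
      apply ContinuousOn.div continuousOn_const
        ((continuous_pow n).continuousOn.add continuousOn_const)
      intro x hx
      have := (hspec x hx).1
      exact ne_of_gt (by positivity : (0:ℝ) < x ^ n + δ ^ n)
    have hkey := key_cfc T Q hQsa n h g hgc
    set X := cfc (fun t : ℝ => t ^ n * g t) Q with hX
    set Y := cfc (fun t : ℝ => t ^ (n+1) * g t) Q with hY
    have h1 : X ≤ 1 := by
      apply cfc_le_one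
      intro x hx
      have hx0 := (hspec x hx).1
      have hden : (0:ℝ) < x ^ n + δ ^ n := by positivity
      rw [hg]
      rw [mul_one_div, div_le_one hden]
      nlinarith [pow_pos hδ n]
    have h2 : Y ≤ star T * T := by
      rw [← hkey]
      calc star T * X * T ≤ star T * 1 * T := star_left_conjugate_le_conjugate h1 T
        _ = star T * T := by rw [mul_one]
    have hYsa : IsSelfAdjoint (Q - Y) := by
      have : IsSelfAdjoint Y := cfc_predicate _ Q
      exact hQsa.sub this
    have hYc : ContinuousOn (fun t : ℝ => t ^ (n+1) * g t) (spectrum ℝ Q) :=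
      (continuous_pow (n+1)).continuousOn.mul hgc
    have h3 : ‖Q - Y‖ ≤ δ := by
      have hsub : Q - Y = cfc (fun t : ℝ => t ^ 1 - t ^ (n+1) * g t) Q := by
        rw [cfc_sub _ _ Q (continuous_pow 1).continuousOn hYc, cfc_pow_id Q 1 hQsa, pow_one]
      rw [hsub]
      apply norm_cfc_le hδ.le
      intro x hx
      obtain ⟨hx0, hxM⟩ := hspec x hx
      rw [Real.norm_eq_abs]
      have hrb := rbound hx0 le_rfl hδ hn 0
      simp only [pow_zero, one_mul, Nat.add_zero] at hrb
      have heq : x ^ 1 - x ^ (n+1) * g x = x ^ (0+1) - x ^ (n + (0+1)) / (x ^ n + δ ^ n) := by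
        simp only [hg, mul_one_div]
      rw [heq]
      exact rbound hx0 le_rfl hδ hn 0 |>.trans (by simp)
    have h4 : Q - Y ≤ δ • (1 : H →L[ℂ] H) := by
      have step1 : Q - Y ≤ algebraMap ℝ (H →L[ℂ] H) ‖Q - Y‖ :=
        hYsa.le_algebraMap_norm_self
      have step2 : algebraMap ℝ (H →L[ℂ] H) ‖Q - Y‖ ≤ δ • 1 := by
        have hnn : (0:H →L[ℂ] H) ≤ algebraMap ℝ (H →L[ℂ] H) (δ - ‖Q - Y‖) := by
          have he : algebraMap ℝ (H →L[ℂ] H) (δ - ‖Q - Y‖)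
              = star (algebraMap ℝ (H →L[ℂ] H) (Real.sqrt (δ - ‖Q - Y‖)))
                * algebraMap ℝ (H →L[ℂ] H) (Real.sqrt (δ - ‖Q - Y‖)) := by
            rw [IsSelfAdjoint.star_eq (by exact IsSelfAdjoint.algebraMap _ (star_trivial _)),
              ← map_mul, Real.mul_self_sqrt (by linarith)]
          rw [he]
          exact star_mul_self_nonneg _
        have he2 : algebraMap ℝ (H →L[ℂ] H) (δ - ‖Q - Y‖)
            = δ • (1:H →L[ℂ] H) - algebraMap ℝ (H →L[ℂ] H) ‖Q - Y‖ := by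
          rw [map_sub, Algebra.algebraMap_eq_smul_one]
        rw [he2] at hnn
        exact sub_nonneg.mp hnn
      exact step1.trans step2
    calc Q = (Q - Y) + Y := by abel
      _ ≤ δ • (1:H →L[ℂ] H) + star T * T := add_le_add h4 h2
      _ = star T * T + δ • 1 := add_comm _ _
  have htend : Filter.Tendsto (fun k : ℕ => star T * T + (1/((k:ℝ)+1)) • (1 : H →L[ℂ] H))
      Filter.atTop (nhds (star T * T)) := by
    have h0 : Filter.Tendsto (fun k : ℕ => (1/((k:ℝ)+1))) Filter.atTop (nhds 0) :=
      tendsto_one_div_add_atTop_nhds_zero_nat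
    have h1 := h0.smul_const (1 : H →L[ℂ] H)
    rw [zero_smul] at h1
    simpa using tendsto_const_nhds.add h1
  refine ge_of_tendsto htend (Filter.Eventually.of_forall fun k => ?_)
  exact hb (1/((k:ℝ)+1)) (by positivity)

open ContinuousLinearMap in
/-- `(T*ʲ Tʲ)^(1/j)` via the continuous functional calculus. -/
noncomputable def rootpow {H : Type*} [NormedAddCommGroup H] [InnerProductSpace ℂ H]
    [CompleteSpace H] (T : H →L[ℂ] H) (j : ℕ) : H →L[ℂ] H :=
  cfc (fun x : ℝ => x ^ ((j : ℝ)⁻¹)) (adjoint (T ^ j) * T ^ j)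


open ContinuousLinearMap in
open ContinuousLinearMap in
private lemma adjmul_nonneg {H : Type*} [NormedAddCommGroup H] [InnerProductSpace ℂ H]
    [CompleteSpace H] (S : H →L[ℂ] H) : 0 ≤ adjoint S * S := by
  rw [← star_eq_adjoint]
  exact star_mul_self_nonneg S

private lemma rpow_cont {c : ℝ} (hc : 0 ≤ c) (s : Set ℝ) :
    ContinuousOn (fun x : ℝ => x ^ c) s := fun x _ =>
  (Real.continuousAt_rpow_const x c (Or.inr hc)).continuousWithinAt

open ContinuousLinearMap in
private lemma rootpow_nonneg {H : Type*} [NormedAddCommGroup H] [InnerProductSpace ℂ H]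
    [CompleteSpace H] (T : H →L[ℂ] H) (j : ℕ) : 0 ≤ rootpow T j := by
  unfold rootpow
  apply cfc_nonneg
  intro x hx
  exact Real.rpow_nonneg (spectrum_nonneg_of_nonneg (adjmul_nonneg (T ^ j)) hx) _

open ContinuousLinearMap in
private lemma rootpow_pow {H : Type*} [NormedAddCommGroup H] [InnerProductSpace ℂ H]
    [CompleteSpace H] (T : H →L[ℂ] H) {j : ℕ} (hj : 1 ≤ j) :
    (rootpow T j) ^ j = adjoint (T ^ j) * T ^ j := by
  unfold rootpow
  have hpos := adjmul_nonneg (T ^ j)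
  have hsa : IsSelfAdjoint (adjoint (T ^ j) * T ^ j) := .of_nonneg hpos
  have hjR : ((j:ℝ))⁻¹ ≥ 0 := by positivity
  rw [← cfc_pow (R := ℝ) _ j (adjoint (T ^ j) * T ^ j) (rpow_cont hjR _) hsa]
  have hcg : ∀ x ∈ spectrum ℝ (adjoint (T ^ j) * T ^ j),
      (x ^ ((j:ℝ)⁻¹)) ^ j = x := by
    intro x hx
    have hx0 : 0 ≤ x := spectrum_nonneg_of_nonneg hpos hx
    rw [← Real.rpow_natCast (x ^ ((j:ℝ)⁻¹)) j, ← Real.rpow_mul hx0,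
      inv_mul_cancel₀ (by positivity), Real.rpow_one]
  rw [cfc_congr hcg, cfc_id' ℝ _ hsa]

open ContinuousLinearMap in
private lemma rootpow_nk {H : Type*} [NormedAddCommGroup H] [InnerProductSpace ℂ H]
    [CompleteSpace H] (T : H →L[ℂ] H) {n k : ℕ} (hn : 1 ≤ n) (hk : 1 ≤ k)
    (hE : adjoint (T ^ (n*k)) * T ^ (n*k) = (adjoint (T ^ n) * T ^ n) ^ k) :
    rootpow T (n*k) = rootpow T n := by
  unfold rootpow
  rw [hE]
  have hpos := adjmul_nonneg (T ^ n)
  have hsa : IsSelfAdjoint (adjoint (T ^ n) * T ^ n) := .of_nonneg hpos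
  have hnkR : (((n*k : ℕ):ℝ))⁻¹ ≥ 0 := by positivity
  rw [← cfc_pow_id (R := ℝ) (adjoint (T ^ n) * T ^ n) k hsa,
    ← cfc_comp (fun x : ℝ => x ^ (((n*k:ℕ):ℝ))⁻¹) (fun x : ℝ => x ^ k)
      (adjoint (T ^ n) * T ^ n) hsa (rpow_cont hnkR _) (continuous_pow k).continuousOn]
  apply cfc_congr
  intro x hx
  have hx0 : 0 ≤ x := spectrum_nonneg_of_nonneg hpos hx
  have hkne : ((k:ℝ)) ≠ 0 := by exact_mod_cast Nat.one_le_iff_ne_zero.mp hk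
  have hnne : ((n:ℝ)) ≠ 0 := by exact_mod_cast Nat.one_le_iff_ne_zero.mp hn
  show (x ^ k : ℝ) ^ (((n*k:ℕ):ℝ))⁻¹ = x ^ ((n:ℝ))⁻¹
  rw [← Real.rpow_natCast x k, ← Real.rpow_mul hx0]
  congr 1
  push_cast
  field_simp

open ContinuousLinearMap in
private lemma rootpow_chain {H : Type*} [NormedAddCommGroup H] [InnerProductSpace ℂ H]
    [CompleteSpace H] (T : H →L[ℂ] H)
    (hmono : ∀ j : ℕ, 1 ≤ j → rootpow T j ≤ rootpow T (j + 1)) :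
    ∀ a b : ℕ, 1 ≤ a → a ≤ b → rootpow T a ≤ rootpow T b := by
  intro a b ha hab
  induction b, hab using Nat.le_induction with
  | base => exact le_refl _
  | succ b hb ih => exact ih.trans (hmono b (ha.trans hb))

open ContinuousLinearMap in
theorem stmt_8 {H : Type*} [NormedAddCommGroup H] [InnerProductSpace ℂ H] [CompleteSpace H] (T : H →L[ℂ] H)
    (hmono : ∀ j : ℕ, 1 ≤ j → rootpow T j ≤ rootpow T (j + 1))
    (n : ℕ) (hn : 2 ≤ n)
    (hq : T ^ n * (adjoint (T ^ n) * T ^ n) = (adjoint (T ^ n) * T ^ n) * T ^ n) :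
    T * (adjoint T * T) = (adjoint T * T) * T := by
  rcases subsingleton_or_nontrivial H with hsub | hnt
  · exact Subsingleton.elim _ _
  have hn1 : 1 ≤ n := le_trans one_le_two hn
  have hq' : T ^ n * (star (T ^ n) * T ^ n) = (star (T ^ n) * T ^ n) * T ^ n := by
    rw [star_eq_adjoint]; exact hq
  have hE := embry_pow (T ^ n) hq'
  set Q := rootpow T n with hQdef
  have hQ0 : 0 ≤ Q := rootpow_nonneg T n
  have hQsa : IsSelfAdjoint Q := .of_nonneg hQ0
  have hchain := rootpow_chain T hmono
  have hsame : ∀ j : ℕ, n ≤ j → rootpow T j = Q := by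
    intro j hj
    have hj1 : 1 ≤ j := hn1.trans hj
    have hEj : adjoint (T ^ (n*j)) * T ^ (n*j) = (adjoint (T ^ n) * T ^ n) ^ j := by
      rw [← star_eq_adjoint, ← star_eq_adjoint, pow_mul]
      exact hE j
    have hnk : rootpow T (n*j) = Q := rootpow_nk T hn1 hj1 hEj
    refine le_antisymm ?_ (hchain n j hn1 hj)
    rw [← hnk]
    exact hchain j (n*j) hj1 (Nat.le_mul_of_pos_left j (by omega))
  have hCj : ∀ j : ℕ, n ≤ j → star (T ^ j) * T ^ j = Q ^ j := by
    intro j hj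
    rw [star_eq_adjoint, ← rootpow_pow T (hn1.trans hj), hsame j hj]
  have hstep : ∀ j : ℕ, n ≤ j → star T * Q ^ j * T = Q ^ (j + 1) := by
    intro j hj
    have e1 := hCj j hj
    have e2 := hCj (j+1) (by omega)
    rw [← e1, ← e2, pow_succ, star_mul, mul_assoc, mul_assoc, mul_assoc]
  obtain ⟨hpowj, hQle⟩ := pow_transfer T Q hQ0 hn1 hstep
  have hC1 : star T * T = Q := by
    refine le_antisymm ?_ hQle
    have h1 : rootpow T 1 = star T * T := by
      have h := rootpow_pow T (le_refl 1)
      rw [pow_one, pow_one, ← star_eq_adjoint] at h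
      exact h
    rw [← h1]
    exact hchain 1 n le_rfl hn1
  have e1 := hpowj 1 le_rfl
  have e2 := hpowj 2 (by omega)
  rw [pow_one] at e1
  have hZz : star (T * Q - Q * T) * (T * Q - Q * T) = 0 := by
    have expand : star (T * Q - Q * T) * (T * Q - Q * T)
        = Q * (star T * T) * Q - Q * (star T * Q * T)
          - (star T * Q * T) * Q + star T * Q ^ 2 * T := by
      rw [star_sub, star_mul, star_mul, hQsa.star_eq]
      noncomm_ring
    rw [expand, hC1, e1, e2]
    noncomm_ring
  have hZ0 : T * Q - Q * T = 0 := (CStarRing.star_mul_self_eq_zero_iff _).mp hZz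
  rw [← star_eq_adjoint, hC1]
  exact sub_eq_zero.mp hZ0
end

section
/- Let T be a bounded operator on a complex Hilbert space H such that T*ᵏTᵏ = (T*T)ᵏ for all nonnegative integers k. Then T is quasinormal, i.e., T(T*T) = (T*T)T. -/
open ContinuousLinearMap in
theorem stmt_11 {H : Type*} [NormedAddCommGroup H] [InnerProductSpace ℂ H] [CompleteSpace H] (T : H →L[ℂ] H)
    (h : ∀ k : ℕ, (adjoint T) ^ k * T ^ k = (adjoint T * T) ^ k) :
    T * (adjoint T * T) = (adjoint T * T) * T := by
  set A := adjoint T * T with hA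
  have hAsa : adjoint A = A := by
    simp only [hA, ← star_eq_adjoint, star_mul, star_star]
  have e2 : adjoint T * A * T = A ^ 2 := by
    rw [← h 2, hA]; noncomm_ring
  have e3 : adjoint T * A ^ 2 * T = A ^ 3 := by
    rw [← h 2, ← h 3]; noncomm_ring
  have innA : ∀ (a b : H), (inner ℂ (A a) b : ℂ) = inner ℂ a (A b) := by
    intro a b
    nth_rewrite 1 [← hAsa]
    exact adjoint_inner_left A b a
  ext x
  simp only [mul_apply_eq_comp]
  set u := A (T x) with hu
  set v := T (A x) with hv
  set c : ℂ := inner ℂ x ((A ^ 3) x) with hc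
  have huu : (inner ℂ u u : ℂ) = c := by
    rw [hu, innA, ← adjoint_inner_right T, hc]
    congr 1
    have := congrArg (fun S => S x) e3
    simpa [mul_apply_eq_comp, pow_succ, mul_assoc] using this
  have huv : (inner ℂ u v : ℂ) = c := by
    rw [hu, hv, innA, ← adjoint_inner_right T, hc]
    congr 1
    have := congrArg (fun S => S (A x)) e2
    simpa [mul_apply_eq_comp, pow_succ, mul_assoc] using this
  have hvv : (inner ℂ v v : ℂ) = c := by
    rw [hv, ← adjoint_inner_right T]
    have heq : adjoint T (T (A x)) = A (A x) := rfl
    rw [heq, innA, hc]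
    congr 1
  have hvu : (inner ℂ v u : ℂ) = c := by
    have h1 : (inner ℂ v u : ℂ) = starRingEnd ℂ (inner ℂ u v) := by
      rw [← inner_conj_symm u v]; simp
    rw [h1, huv, ← huu]
    exact inner_conj_symm u u
  have hz : (inner ℂ (u - v) (u - v) : ℂ) = 0 := by
    rw [inner_sub_sub_self, huu, huv, hvv, hvu]; ring
  have h0 : u - v = 0 := inner_self_eq_zero.mp hz
  have h1 := sub_eq_zero.mp h0
  rw [hu, hv] at h1
  exact h1.symm
end

section
/- For every integer n ≥ 2, there exists a bounded sequence λ = (λₖ)ₖ≥0 of positive real numbers and the associated unilateral weighted shift W on ℓ² such that Wⁿ = Uⁿ (U the unweighted unilateral shift) but W is not quasinormal. -/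
open scoped ComplexConjugate ENNReal

noncomputable section AuxShiftSection

namespace AuxShift

local notation "H" => lp (fun _ : ℕ => ℂ) 2

/-- the weighted shift of a sequence -/
def sfun (w : ℕ → ℂ) (x : ℕ → ℂ) : ℕ → ℂ
  | 0 => 0
  | (k+1) => w k * x k

lemma memℓp_sfun {w : ℕ → ℂ} {C : ℝ} (hw : ∀ k, ‖w k‖ ≤ C) (x : H) :
    Memℓp (sfun w x) 2 := by
  have hC : 0 ≤ C := (norm_nonneg _).trans (hw 0)
  apply memℓp_gen
  have hx : Summable (fun k => ‖(x : ℕ → ℂ) k‖ ^ (2 : ℝ≥0∞).toReal) :=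
    (lp.memℓp x).summable (by norm_num)
  have h1 : Summable (fun k => C ^ (2 : ℝ≥0∞).toReal * ‖(x : ℕ → ℂ) k‖ ^ (2 : ℝ≥0∞).toReal) :=
    hx.mul_left _
  refine (summable_nat_add_iff 1).mp ?_
  refine Summable.of_nonneg_of_le (fun k => Real.rpow_nonneg (norm_nonneg _) _)
    (fun k => ?_) h1
  show ‖w k * (x : ℕ → ℂ) k‖ ^ (2 : ℝ≥0∞).toReal ≤ _
  rw [← Real.mul_rpow hC (norm_nonneg _)]
  refine Real.rpow_le_rpow (norm_nonneg _) ?_ (by norm_num)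
  rw [norm_mul]
  exact mul_le_mul_of_nonneg_right (hw k) (norm_nonneg _)

lemma norm_sfun_le {w : ℕ → ℂ} {C : ℝ} (hw : ∀ k, ‖w k‖ ≤ C) (x : H) :
    ‖(⟨sfun w x, memℓp_sfun hw x⟩ : H)‖ ≤ C * ‖x‖ := by
  have hC : 0 ≤ C := (norm_nonneg _).trans (hw 0)
  apply lp.norm_le_of_tsum_le (by norm_num) (mul_nonneg hC (norm_nonneg _))
  have hs : Summable (fun k => ‖sfun w x k‖ ^ (2 : ℝ≥0∞).toReal) :=
    (memℓp_sfun hw x).summable (by norm_num)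
  have hx : Summable (fun k => ‖(x : ℕ → ℂ) k‖ ^ (2 : ℝ≥0∞).toReal) :=
    (lp.memℓp x).summable (by norm_num)
  show ∑' k, ‖sfun w x k‖ ^ (2 : ℝ≥0∞).toReal ≤ _
  rw [Summable.tsum_eq_zero_add hs]
  have h0 : ‖sfun w x 0‖ ^ (2 : ℝ≥0∞).toReal = 0 := by
    show ‖(0 : ℂ)‖ ^ (2 : ℝ≥0∞).toReal = 0
    rw [norm_zero]
    exact Real.zero_rpow (by norm_num)
  rw [h0, zero_add]
  have hterm : ∀ k, ‖sfun w x (k + 1)‖ ^ (2 : ℝ≥0∞).toReal ≤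
      C ^ (2 : ℝ≥0∞).toReal * ‖(x : ℕ → ℂ) k‖ ^ (2 : ℝ≥0∞).toReal := by
    intro k
    show ‖w k * (x : ℕ → ℂ) k‖ ^ (2 : ℝ≥0∞).toReal ≤ _
    rw [← Real.mul_rpow hC (norm_nonneg _)]
    refine Real.rpow_le_rpow (norm_nonneg _) ?_ (by norm_num)
    rw [norm_mul]
    exact mul_le_mul_of_nonneg_right (hw k) (norm_nonneg _)
  calc ∑' k, ‖sfun w x (k + 1)‖ ^ (2 : ℝ≥0∞).toReal
      ≤ ∑' k, C ^ (2 : ℝ≥0∞).toReal * ‖(x : ℕ → ℂ) k‖ ^ (2 : ℝ≥0∞).toReal :=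
        Summable.tsum_le_tsum hterm ((summable_nat_add_iff 1).mpr hs) (hx.mul_left _)
    _ = C ^ (2 : ℝ≥0∞).toReal * ∑' k, ‖(x : ℕ → ℂ) k‖ ^ (2 : ℝ≥0∞).toReal := tsum_mul_left
    _ = C ^ (2 : ℝ≥0∞).toReal * ‖x‖ ^ (2 : ℝ≥0∞).toReal := by
        rw [lp.norm_rpow_eq_tsum (by norm_num) x]
    _ = (C * ‖x‖) ^ (2 : ℝ≥0∞).toReal := (Real.mul_rpow hC (norm_nonneg _)).symm

/-- the weighted shift as a continuous linear map -/
def sCLM (w : ℕ → ℂ) {C : ℝ} (hw : ∀ k, ‖w k‖ ≤ C) : H →L[ℂ] H :=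
  LinearMap.mkContinuous
    { toFun := fun x => (⟨sfun w x, memℓp_sfun hw x⟩ : H)
      map_add' := by
        intro x y
        apply lp.ext
        funext k
        cases k with
        | zero => show (0:ℂ) = sfun w x 0 + sfun w y 0; exact (add_zero (0:ℂ)).symm
        | succ k =>
            show sfun w (↑(x + y)) (k+1) = sfun w x (k+1) + sfun w y (k+1)
            show w k * ((x + y : H) : ℕ → ℂ) k = w k * _ + w k * _
            rw [lp.coeFn_add, Pi.add_apply, mul_add]
      map_smul' := by
        intro c x
        apply lp.ext
        funext k
        cases k with
        | zero =>
            show (0 : ℂ) = (c • (⟨sfun w x, memℓp_sfun hw x⟩ : H) : H) 0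
            rw [lp.coeFn_smul, Pi.smul_apply]
            show (0 : ℂ) = c • sfun w x 0
            simp [sfun]
        | succ k =>
            show w k * ((c • x : H) : ℕ → ℂ) k = (c • (⟨sfun w x, memℓp_sfun hw x⟩ : H) : H) (k+1)
            rw [lp.coeFn_smul, Pi.smul_apply, lp.coeFn_smul, Pi.smul_apply]
            show w k * (c • (x : ℕ → ℂ) k) = c • (w k * (x : ℕ → ℂ) k)
            simp [smul_eq_mul]; ring }
    C (fun x => norm_sfun_le hw x)

lemma sCLM_apply (w : ℕ → ℂ) {C : ℝ} (hw : ∀ k, ‖w k‖ ≤ C) (x : H) (k : ℕ) :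
    (sCLM w hw x : ℕ → ℂ) k = sfun w x k := rfl

lemma sCLM_single (w : ℕ → ℂ) {C : ℝ} (hw : ∀ k, ‖w k‖ ≤ C) (k : ℕ) :
    sCLM w hw (lp.single 2 k (1 : ℂ)) = w k • lp.single 2 (k + 1) (1 : ℂ) := by
  apply lp.ext
  funext j
  rw [sCLM_apply, lp.coeFn_smul, Pi.smul_apply]
  cases j with
  | zero =>
      show (0 : ℂ) = w k • (lp.single 2 (k+1) (1:ℂ) : ℕ → ℂ) 0
      simp [lp.single_apply]
  | succ j =>
      show w j * (lp.single 2 k (1:ℂ) : ℕ → ℂ) j = w k • (lp.single 2 (k+1) (1:ℂ) : ℕ → ℂ) (j+1)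
      by_cases h : j = k
      · subst h
        simp [lp.single_apply]
      · simp [lp.single_apply, h]

lemma sCLM_pow_apply (w : ℕ → ℂ) {C : ℝ} (hw : ∀ k, ‖w k‖ ≤ C) :
    ∀ (m : ℕ) (x : H) (k : ℕ),
      ((sCLM w hw ^ m) x : ℕ → ℂ) k =
        if m ≤ k then (∏ i ∈ Finset.Ico (k - m) k, w i) * (x : ℕ → ℂ) (k - m) else 0
  | 0, x, k => by simp
  | (m+1), x, k => by
    rw [pow_succ, ContinuousLinearMap.mul_apply, sCLM_pow_apply w hw m]
    rcases lt_or_ge k m with h | h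
    · rw [if_neg (by omega), if_neg (by omega)]
    rcases eq_or_lt_of_le h with rfl | h'
    · rw [if_pos le_rfl, if_neg (by omega), Nat.sub_self, sCLM_apply]
      show _ * (0 : ℂ) = 0
      rw [mul_zero]
    · rw [if_pos h, if_pos (by omega), sCLM_apply]
      have h1 : k - m = (k - (m+1)) + 1 := by omega
      rw [h1]
      show _ * (w (k - (m+1)) * (x : ℕ → ℂ) (k - (m+1))) = _
      rw [Finset.prod_eq_prod_Ico_succ_bot (show k - (m+1) < k by omega) w, ← h1]
      ring

lemma sCLM_adjoint (w : ℕ → ℂ) {C : ℝ} (hw : ∀ k, ‖w k‖ ≤ C) (k : ℕ) :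
    ContinuousLinearMap.adjoint (sCLM w hw) (lp.single 2 (k+1) (1 : ℂ)) =
      (conj (w k)) • lp.single 2 k (1 : ℂ) := by
  apply ext_inner_right ℂ
  intro v
  rw [ContinuousLinearMap.adjoint_inner_left, inner_smul_left,
    lp.inner_single_left, lp.inner_single_left]
  show inner ℂ (1:ℂ) ((sCLM w hw v : ℕ → ℂ) (k+1)) = conj (conj (w k)) * inner ℂ (1:ℂ) _
  rw [sCLM_apply]
  show inner ℂ (1:ℂ) (w k * (v : ℕ → ℂ) k) = _
  simp

end AuxShift

end AuxShiftSection

open AuxShift in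
open ContinuousLinearMap in
theorem stmt_14 (n : ℕ) (hn : 2 ≤ n) :
    ∃ (lam : ℕ → ℝ) (W U : lp (fun _ : ℕ => ℂ) 2 →L[ℂ] lp (fun _ : ℕ => ℂ) 2),
      (∀ k, 0 < lam k) ∧ (∃ M, ∀ k, lam k ≤ M) ∧
      (∀ k : ℕ, W (lp.single 2 k (1 : ℂ)) = (lam k : ℂ) • lp.single 2 (k + 1) (1 : ℂ)) ∧
      (∀ k : ℕ, U (lp.single 2 k (1 : ℂ)) = lp.single 2 (k + 1) (1 : ℂ)) ∧
      W ^ n = U ^ n ∧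
      ¬ (W * (adjoint W * W) = (adjoint W * W) * W) := by
  set lam : ℕ → ℝ := fun k => if k % n = 0 then 2 else if k % n = 1 then 1/2 else 1 with hlam
  set w : ℕ → ℂ := fun k => (lam k : ℂ) with hw
  have hlampos : ∀ k, 0 < lam k := by
    intro k
    simp only [hlam]
    split <;> [norm_num; split <;> norm_num]
  have hlamle : ∀ k, lam k ≤ 2 := by
    intro k
    simp only [hlam]
    split <;> [norm_num; split <;> norm_num]
  have hwb : ∀ k, ‖w k‖ ≤ 2 := by
    intro k
    simp only [hw, Complex.norm_real, Real.norm_eq_abs,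
      abs_of_pos (hlampos k)]
    exact hlamle k
  have hub : ∀ k : ℕ, ‖(1 : ℂ)‖ ≤ (1:ℝ) := by intro k; norm_num
  refine ⟨lam, sCLM w hwb, sCLM (fun _ => 1) hub, hlampos, ⟨2, hlamle⟩,
    fun k => sCLM_single w hwb k, fun k => by
      rw [sCLM_single (fun _ => 1) hub k, one_smul], ?_, ?_⟩
  · -- W ^ n = U ^ n
    have hlam0 : lam 0 = 2 := by simp [hlam]
    have hlam1 : lam 1 = 1/2 := by
      simp only [hlam]
      rw [Nat.mod_eq_of_lt (by omega)]
      norm_num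
    have hprod : ∀ m : ℕ, (∏ i ∈ Finset.Ico m (m + n), w i) = 1 := by
      intro m
      induction m with
      | zero =>
          rw [Nat.zero_add, ← Finset.range_eq_Ico]
          have hsplit : (∏ i ∈ Finset.range 2, w i) * (∏ i ∈ Finset.Ico 2 n, w i)
              = ∏ i ∈ Finset.range n, w i := by
            rw [Finset.range_eq_Ico, Finset.range_eq_Ico]
            exact Finset.prod_Ico_consecutive w (m := 0) (n := 2) (k := n) (by omega) (by omega)
          have h2 : (∏ i ∈ Finset.range 2, w i) = 1 := by
            rw [Finset.prod_range_succ, Finset.prod_range_one]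
            show w 0 * w 1 = 1
            simp only [hw]
            rw [hlam0, hlam1]
            norm_num
          have h3 : (∏ i ∈ Finset.Ico 2 n, w i) = 1 := by
            apply Finset.prod_eq_one
            intro i hi
            rw [Finset.mem_Ico] at hi
            simp only [hw, hlam]
            rw [Nat.mod_eq_of_lt hi.2]
            rw [if_neg (by omega), if_neg (by omega)]
            norm_num
          rw [← hsplit, h2, h3, one_mul]
      | succ m ih =>
          have hper : w (m + n) = w m := by
            simp only [hw, hlam, Nat.add_mod_right]
          have hbot : w m * ∏ i ∈ Finset.Ico (m+1) (m + n), w i = 1 := by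
            rw [← Finset.prod_eq_prod_Ico_succ_bot (show m < m + n by omega) w]
            exact ih
          have : m + 1 + n = (m + n) + 1 := by omega
          rw [this, Finset.prod_Ico_succ_top (by omega), hper, mul_comm]
          exact hbot
    apply ContinuousLinearMap.ext
    intro x
    apply lp.ext
    funext k
    rw [sCLM_pow_apply w hwb n x k, sCLM_pow_apply (fun _ => 1) hub n x k]
    by_cases h : n ≤ k
    · rw [if_pos h, if_pos h]
      have hk : k = (k - n) + n := by omega
      have := hprod (k - n)
      rw [← hk] at this
      rw [this, Finset.prod_const_one]
    · rw [if_neg h, if_neg h]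
  · -- not quasinormal
    intro h
    have hW0 : sCLM w hwb (lp.single 2 0 (1:ℂ)) = w 0 • lp.single 2 1 (1:ℂ) :=
      sCLM_single w hwb 0
    have hW1 : sCLM w hwb (lp.single 2 1 (1:ℂ)) = w 1 • lp.single 2 2 (1:ℂ) :=
      sCLM_single w hwb 1
    have hA1 : adjoint (sCLM w hwb) (lp.single 2 1 (1:ℂ)) = conj (w 0) • lp.single 2 0 (1:ℂ) :=
      sCLM_adjoint w hwb 0
    have hA2 : adjoint (sCLM w hwb) (lp.single 2 2 (1:ℂ)) = conj (w 1) • lp.single 2 1 (1:ℂ) :=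
      sCLM_adjoint w hwb 1
    have h0 := congrArg (fun T => T (lp.single 2 0 (1:ℂ))) h
    simp only [ContinuousLinearMap.mul_apply] at h0
    simp only [hW0, hW1, hA1, hA2, map_smul, smul_smul] at h0
    have hc0 : w 0 = 2 := by
      simp only [hw, hlam]; norm_num
    have hc1 : w 1 = 1/2 := by
      simp only [hw, hlam]
      rw [Nat.mod_eq_of_lt (by omega)]
      norm_num
    have hconj0 : (starRingEnd ℂ) (w 0) = w 0 := by
      simp only [hw]; exact Complex.conj_ofReal _
    have hconj1 : (starRingEnd ℂ) (w 1) = w 1 := by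
      simp only [hw]; exact Complex.conj_ofReal _
    rw [hconj0, hconj1, hc0, hc1] at h0
    have h1 := congrArg (fun z : lp (fun _ : ℕ => ℂ) 2 => (z : ℕ → ℂ) 1) h0
    simp only [lp.coeFn_smul, Pi.smul_apply, smul_eq_mul, lp.single_apply_self] at h1
    norm_num at h1
end

section
/- Let T be a bounded quasinormal operator on a complex Hilbert space H, and suppose T is an n-th root of a normal operator, i.e., Tⁿ is normal for some positive integer n. Then T is normal. -/
open ContinuousLinearMap in
theorem stmt_19 {H : Type*} [NormedAddCommGroup H] [InnerProductSpace ℂ H] [CompleteSpace H] (T : H →L[ℂ] H)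
    (hq : T * (adjoint T * T) = (adjoint T * T) * T)
    (n : ℕ) (hn : 0 < n)
    (hnormal : adjoint (T ^ n) * T ^ n = T ^ n * adjoint (T ^ n)) :
    adjoint T * T = T * adjoint T := by
  rw [← star_eq_adjoint] at hq hnormal ⊢
  rw [star_pow] at hnormal
  set P : H →L[ℂ] H := star T * T with hP
  set Q : H →L[ℂ] H := T * star T with hQ
  set D : H →L[ℂ] H := P - Q with hD
  -- basic commutations
  have h1 : T * P = P * T := hq
  have hPsa : star P = P := by simp [hP, star_mul]
  have hQsa : star Q = Q := by simp [hQ, star_mul]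
  have h2 : star T * P = P * star T := by
    have := congrArg star h1
    simpa [star_mul, hPsa] using this.symm
  have cT : Commute (star T) P := h2
  -- D * T = 0
  have h3 : D * T = 0 := by
    have : Q * T = T * P := by rw [hQ, hP, mul_assoc]
    rw [hD, sub_mul, this, h1, sub_self]
  -- D * P = D * D
  have h5 : D * P = D * D := by
    have h4 : D * Q = 0 := by rw [hQ, ← mul_assoc, h3, zero_mul]
    have : P = Q + D := by rw [hD]; abel
    rw [this, mul_add, h4, zero_add]
  -- powers
  have h6 : ∀ k : ℕ, D ^ (k + 1) = D * P ^ k := by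
    intro k
    induction k with
    | zero => simp
    | succ k ih =>
      calc D ^ (k + 2) = D * D ^ (k + 1) := by rw [pow_succ']
        _ = D * (D * P ^ k) := by rw [ih]
        _ = (D * D) * P ^ k := by rw [mul_assoc]
        _ = (D * P) * P ^ k := by rw [h5]
        _ = D * P ^ (k + 1) := by rw [mul_assoc, ← pow_succ']
  have h7 : ∀ k : ℕ, (star T) ^ k * T ^ k = P ^ k := by
    intro k
    induction k with
    | zero => simp
    | succ k ih =>
      calc (star T) ^ (k + 1) * T ^ (k + 1)
          = star T * ((star T) ^ k * T ^ k) * T := by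
            rw [pow_succ', pow_succ]; noncomm_ring
        _ = star T * P ^ k * T := by rw [ih]
        _ = P ^ k * star T * T := by rw [(cT.pow_right k).eq]
        _ = P ^ (k + 1) := by rw [pow_succ, mul_assoc]
  -- P ^ n = T ^ n * (star T) ^ n
  have h8 : P ^ n = T ^ n * (star T) ^ n := by rw [← h7 n, hnormal]
  -- D * T ^ n = 0
  have h9 : D * T ^ n = 0 := by
    obtain ⟨m, rfl⟩ := Nat.exists_eq_add_of_lt hn
    rw [zero_add, pow_succ', ← mul_assoc, h3, zero_mul]
  -- D is nilpotent
  have h10 : D ^ (n + 1) = 0 := by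
    rw [h6 n, h8, ← mul_assoc, h9, zero_mul]
  -- D is self-adjoint, hence D = 0
  have hDsa : IsSelfAdjoint D := by
    rw [IsSelfAdjoint, star_sub, hPsa, hQsa]
  have hD0 : D = 0 := by
    have hle : n + 1 ≤ 2 ^ (n + 1) := (Nat.lt_two_pow_self (n := n + 1)).le
    have hzero : D ^ 2 ^ (n + 1) = 0 := by
      rw [← Nat.add_sub_cancel' hle, pow_add, h10, zero_mul]
    have := hDsa.nnnorm_pow_two_pow (n + 1)
    rw [hzero, nnnorm_zero] at this
    have : ‖D‖₊ = 0 := by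
      have h2pos : 0 < 2 ^ (n + 1) := Nat.pow_pos (by norm_num)
      simpa using pow_eq_zero_iff (n := 2 ^ (n + 1)) h2pos.ne' |>.mp this.symm
    simpa using this
  have hPQ : P = Q := by rwa [hD, sub_eq_zero] at hD0
  exact hPQ
end
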